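/- Let n, M ∈ ℕ with M ≥ 4^n. Then for any sequence of n-qubit expectation value sampling models — the k-th model given by a Borel probability measure ν_k on ℝ^{L_k}, a measurable map φ_k : ℝ^{L_k} → { unit vectors of ℂ^{2^n} }, and Hermitian 2^n × 2^n matrices O_{k,1}, …, O_{k,M} — the output distributions, i.e. the pushforwards of ν_k under x ↦ ( ⟨φ_k(x), O_{k,m} φ_k(x)⟩ )_{m=1,…,M}, do not converge weakly to the uniform probability measure on [−1,1]^M. Hence for an n-qubit expectation value sampling model family to approximate every distribution with support in [−1,1]^M to arbitrary accuracy, it is necessary that M ≤ 4^n − 1. -/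

import Mathlib

open Matrix MeasureTheory Filter
open scoped ENNReal NNReal

/-- The uniform (normalized Lebesgue) probability measure on the cube `[-1,1]^M`. -/
noncomputable def uniformCube (M : ℕ) : Measure (Fin M → ℝ) :=
  (volume (Set.univ.pi fun _ : Fin M => Set.Icc (-1 : ℝ) 1))⁻¹ •
    volume.restrict (Set.univ.pi fun _ : Fin M => Set.Icc (-1 : ℝ) 1)


noncomputable def hermSub (N : ℕ) : Submodule ℝ (Matrix (Fin N) (Fin N) ℂ) where
  carrier := {A | Aᴴ = A}
  add_mem' := by intro A B hA hB; simp_all [Matrix.conjTranspose_add]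
  zero_mem' := by simp
  smul_mem' := by intro r A hA; simp_all [Matrix.conjTranspose_smul]

theorem hermSub_finrank (N : ℕ) : Module.finrank ℝ (hermSub N) ≤ N * N := by
  classical
  let τ : Matrix (Fin N) (Fin N) ℂ →ₗ[ℝ] (Fin N × Fin N → ℝ) :=
    { toFun := fun A => fun p => if p.1 ≤ p.2 then (A p.1 p.2).re else (A p.1 p.2).im
      map_add' := by intros; funext p; by_cases h : p.1 ≤ p.2 <;> simp [h]
      map_smul' := by intros; funext p; by_cases h : p.1 ≤ p.2 <;> simp [h, Complex.smul_re, Complex.smul_im] }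
  have hinj : Function.Injective (τ.domRestrict (hermSub N)) := by
    rw [← LinearMap.ker_eq_bot, LinearMap.ker_eq_bot']
    rintro ⟨A, hA⟩ hz
    have hz' : ∀ i j : Fin N, (if i ≤ j then (A i j).re else (A i j).im) = 0 := by
      intro i j; exact congrFun hz (i, j)
    have hconj : ∀ i j, A j i = (starRingEnd ℂ) (A i j) := by
      intro i j
      have := congrFun (congrFun hA j) i
      simpa [Matrix.conjTranspose_apply] using this.symm
    have key : ∀ i j : Fin N, i ≤ j → A i j = 0 := by
      intro i j hij
      have hre : (A i j).re = 0 := by have := hz' i j; simpa [hij] using this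
      rcases eq_or_lt_of_le hij with h | h
      · subst h
        have him : (A i i).im = 0 := by
          have h2 := congrArg Complex.im (hconj i i)
          simp at h2
          linarith
        exact Complex.ext hre him
      · have him : (A j i).im = 0 := by
          have := hz' j i; simpa [not_le.mpr h] using this
        have : (A i j).im = 0 := by
          have h2 := congrArg Complex.im (hconj i j)
          simp at h2
          -- h2 : (A j i).im = -(A i j).im
          rw [him] at h2; linarith
        exact Complex.ext hre this
    have : A = 0 := by
      funext i j
      rcases le_or_gt i j with h | h
      · exact key i j h
      · have := key j i h.le
        rw [hconj j i, this]; simp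
    exact Subtype.ext this
  have h := LinearMap.finrank_le_finrank_of_injective hinj
  simpa [Module.finrank_pi] using h

theorem exists_dependence (N M : ℕ) (hN : 0 < N) (hNM : N * N ≤ M)
    (O : Fin M → Matrix (Fin N) (Fin N) ℂ) (hO : ∀ m, (O m).IsHermitian) :
    ∃ (a : Fin M → ℝ) (b : ℝ), a ≠ 0 ∧
      (∑ m, a m • O m) + b • (1 : Matrix (Fin N) (Fin N) ℂ) = 0 := by
  classical
  let Λ : ((Fin M → ℝ) × ℝ) →ₗ[ℝ] Matrix (Fin N) (Fin N) ℂ :=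
    { toFun := fun p => (∑ m, p.1 m • O m) + p.2 • 1
      map_add' := by
        intro p q
        simp [add_smul, Finset.sum_add_distrib]
        abel
      map_smul' := by
        intro r p
        simp [smul_smul, Finset.smul_sum, smul_add] }
  have hmem : ∀ p, Λ p ∈ hermSub N := by
    intro p
    show ((∑ m, p.1 m • O m) + p.2 • 1)ᴴ = _
    rw [Matrix.conjTranspose_add, Matrix.conjTranspose_smul]
    congr 1
    · rw [Matrix.conjTranspose_sum]
      refine Finset.sum_congr rfl fun m _ => ?_
      rw [Matrix.conjTranspose_smul, (hO m).eq]
      norm_num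
    · norm_num
  let Λ' := Λ.codRestrict (hermSub N) hmem
  have hker : LinearMap.ker Λ' ≠ ⊥ := by
    intro hbot
    have hinj : Function.Injective Λ' := LinearMap.ker_eq_bot.mp hbot
    have h1 := LinearMap.finrank_le_finrank_of_injective hinj
    have h2 := hermSub_finrank N
    have h3 : Module.finrank ℝ ((Fin M → ℝ) × ℝ) = M + 1 := by
      simp [Module.finrank_prod, Module.finrank_pi]
    omega
  rcases Submodule.ne_bot_iff _ |>.mp hker with ⟨⟨a, b⟩, hmemker, hne⟩
  have hzero : (∑ m, a m • O m) + b • (1 : Matrix (Fin N) (Fin N) ℂ) = 0 := by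
    have := LinearMap.mem_ker.mp hmemker
    have : Λ (a, b) = 0 := by
      have h := congrArg Subtype.val this
      simpa [Λ'] using h
    simpa [Λ] using this
  by_cases ha : a = 0
  · exfalso
    subst ha
    have hb : b • (1 : Matrix (Fin N) (Fin N) ℂ) = 0 := by simpa using hzero
    have : b = 0 := by
      have := congrFun (congrFun hb ⟨0, hN⟩) ⟨0, hN⟩
      simpa [Matrix.one_apply, Complex.ext_iff] using this
    exact hne (by simp [this, Prod.ext_iff])
  · exact ⟨a, b, ha, hzero⟩

theorem pointwise_identity (N M : ℕ) (ψ : Fin N → ℂ) (hψ : star ψ ⬝ᵥ ψ = 1)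
    (O : Fin M → Matrix (Fin N) (Fin N) ℂ) (a : Fin M → ℝ) (b : ℝ)
    (hzero : (∑ m, a m • O m) + b • (1 : Matrix (Fin N) (Fin N) ℂ) = 0) :
    (∑ m, a m * (star ψ ⬝ᵥ (O m).mulVec ψ).re) + b = 0 := by
  classical
  let q : Matrix (Fin N) (Fin N) ℂ →ₗ[ℝ] ℂ :=
    { toFun := fun A => star ψ ⬝ᵥ A.mulVec ψ
      map_add' := by intro A B; simp [Matrix.add_mulVec, dotProduct_add]
      map_smul' := by intro r A; simp [Matrix.smul_mulVec, dotProduct_smul] }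
  have hq : q ((∑ m, a m • O m) + b • 1) = 0 := by rw [hzero]; simp [q, Matrix.mulVec_zero]
  rw [map_add, map_sum] at hq
  simp only [LinearMap.map_smul] at hq
  have hq1 : q 1 = 1 := by simp [q, Matrix.one_mulVec, hψ]
  rw [hq1] at hq
  have := congrArg Complex.re hq
  simpa [q, Complex.re_sum, Complex.smul_re] using this


theorem cube_volume (M : ℕ) :
    volume (Set.univ.pi fun _ : Fin M => Set.Icc (-1 : ℝ) 1) = 2 ^ M := by
  rw [volume_pi_pi]
  simp [Real.volume_Icc]
  norm_num

theorem pos_int (M : ℕ) (hM : 0 < M) (u : Fin M → ℝ) (hu : 1 ≤ ∑ i, |u i|) (c : ℝ) :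
    0 < ∫ y, min ((∑ i, u i * y i - c)^2) 1 ∂(uniformCube M) := by
  classical
  set cube := Set.univ.pi fun _ : Fin M => Set.Icc (-1 : ℝ) 1 with hcube
  set G : (Fin M → ℝ) → ℝ := fun y => min ((∑ i, u i * y i - c)^2) 1 with hG
  have hGcont : Continuous G := by
    apply Continuous.min _ continuous_const
    apply Continuous.pow
    exact (continuous_finset_sum _ fun i _ => (continuous_const.mul (continuous_apply i))).sub continuous_const
  have hGnonneg : ∀ y, 0 ≤ G y := fun y => le_min (sq_nonneg _) one_pos.le
  set S : Set (Fin M → ℝ) := Set.univ.pi fun i =>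
    if (0 ≤ u i) = (c ≤ 0) then Set.Icc (1/2 : ℝ) 1 else Set.Icc (-1 : ℝ) (-(1/2)) with hS
  have hSsub : S ⊆ cube := by
    intro y hy i _
    have := hy i (Set.mem_univ i)
    by_cases h : (0 ≤ u i) = (c ≤ 0) <;> simp [h] at this <;>
      exact ⟨by linarith [this.1], by linarith [this.2]⟩
  have hSmeas : MeasurableSet S := by
    apply MeasurableSet.univ_pi
    intro i
    by_cases h : (0 ≤ u i) = (c ≤ 0) <;> simp [h] <;> exact measurableSet_Icc
  have hSvol : volume S = (ENNReal.ofReal (1/2)) ^ M := by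
    rw [hS, volume_pi_pi]
    rw [Finset.prod_congr rfl (fun i _ => ?_), Finset.prod_const, Finset.card_univ, Fintype.card_fin]
    by_cases h : (0 ≤ u i) = (c ≤ 0) <;> simp [h, Real.volume_Icc] <;> norm_num <;> rw [one_div, ENNReal.ofReal_inv_of_pos (by norm_num : (0:ℝ) < 2), ENNReal.ofReal_ofNat]
  have hkey : ∀ y ∈ S, (1/4 : ℝ) ≤ G y := by
    intro y hy
    have hyi : ∀ i, if c ≤ 0 then (|u i| / 2 ≤ u i * y i ∧ u i * y i ≤ |u i|)
        else (-|u i| ≤ u i * y i ∧ u i * y i ≤ -(|u i| / 2)) := by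
      intro i
      have hmem := hy i (Set.mem_univ i)
      by_cases hc : c ≤ 0 <;> by_cases hui : 0 ≤ u i <;> simp only [hc, if_true, if_false, eq_self_iff_true]
      · have hcond : (0 ≤ u i) = (c ≤ 0) := by simp [hui, hc]
        simp [hcond] at hmem
        rw [abs_of_nonneg hui]; constructor <;> nlinarith [hmem.1, hmem.2]
      · have hcond : ¬((0 ≤ u i) = (c ≤ 0)) := by simp [hui, hc]
        simp [hcond] at hmem
        rw [abs_of_neg (not_le.mp hui)]
        constructor <;> nlinarith [hmem.1, hmem.2, not_le.mp hui]
      · have hcond : ¬((0 ≤ u i) = (c ≤ 0)) := by simp [hui, hc]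
        simp [hcond] at hmem
        rw [abs_of_nonneg hui]; constructor <;> nlinarith [hmem.1, hmem.2]
      · have hcond : (0 ≤ u i) = (c ≤ 0) := by simp [hui, hc]
        simp [hcond] at hmem
        rw [abs_of_neg (not_le.mp hui)]
        constructor <;> nlinarith [hmem.1, hmem.2, not_le.mp hui]
    have hhalf : (1/2 : ℝ) ≤ ∑ i, |u i| / 2 := by
      rw [← Finset.sum_div]; linarith
    have habs : 1/2 ≤ |∑ i, u i * y i - c| := by
      by_cases hc : c ≤ 0
      · have hlow : (∑ i, |u i| / 2) ≤ ∑ i, u i * y i := by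
          apply Finset.sum_le_sum
          intro i _
          have := hyi i; rw [if_pos hc] at this; exact this.1
        rw [abs_of_nonneg (by linarith)]
        linarith
      · have hhigh : (∑ i, u i * y i) ≤ ∑ i, -(|u i| / 2) := by
          apply Finset.sum_le_sum
          intro i _
          have := hyi i; rw [if_neg hc] at this; exact this.2
        rw [Finset.sum_neg_distrib] at hhigh
        rw [abs_of_nonpos (by push_neg at hc; linarith)]
        push_neg at hc
        linarith
    have : 1/4 ≤ (∑ i, u i * y i - c)^2 := by
      nlinarith [habs, abs_nonneg (∑ i, u i * y i - c), sq_abs (∑ i, u i * y i - c)]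
    exact le_min this (by norm_num)
  have hcompact : IsCompact cube := isCompact_univ_pi fun i => isCompact_Icc
  have hint : IntegrableOn G cube volume := hGcont.continuousOn.integrableOn_compact hcompact
  have hSfin : volume S < ⊤ := by
    rw [hSvol]
    exact ENNReal.pow_lt_top ENNReal.ofReal_lt_top
  have hstep1 : (1/4 : ℝ) * (volume S).toReal ≤ ∫ y in S, G y ∂volume := by
    have hconst : ∫ _ in S, (1/4 : ℝ) ∂volume = (volume S).toReal * (1/4) := by
      rw [setIntegral_const, smul_eq_mul]; rfl
    rw [← mul_comm ((volume S).toReal), ← hconst]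
    apply setIntegral_mono_on
    · exact integrableOn_const hSfin.ne
    · exact hint.mono_set hSsub
    · exact hSmeas
    · exact hkey
  have hstep2 : ∫ y in S, G y ∂volume ≤ ∫ y in cube, G y ∂volume := by
    apply integral_mono_measure (Measure.restrict_mono hSsub le_rfl)
    · exact Filter.Eventually.of_forall hGnonneg
    · exact hint
  have hSvolR : (volume S).toReal = (1/2 : ℝ)^M := by
    rw [hSvol, ENNReal.toReal_pow, ENNReal.toReal_ofReal (by norm_num)]
  have hposint : 0 < ∫ y in cube, G y ∂volume := by
    have : (0:ℝ) < (1/4) * (1/2)^M := by positivity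
    rw [hSvolR] at hstep1
    linarith
  have hμ : uniformCube M = (2^M : ℝ≥0∞)⁻¹ • volume.restrict cube := by
    simp only [uniformCube, cube_volume]; rfl
  rw [hμ, integral_smul_measure]
  have htr : ((2^M : ℝ≥0∞)⁻¹).toReal = (2^M : ℝ)⁻¹ := by
    rw [ENNReal.toReal_inv]
    norm_num
  rw [htr, smul_eq_mul]
  positivity


theorem y_measurable (N M : ℕ) {X : Type*} [MeasurableSpace X] (φ : X → (Fin N → ℂ))
    (hφ : Measurable φ) (O : Fin M → Matrix (Fin N) (Fin N) ℂ) :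
    Measurable (fun x => fun m : Fin M => (star (φ x) ⬝ᵥ (O m).mulVec (φ x)).re) := by
  apply measurable_pi_lambda
  intro m
  apply Complex.measurable_re.comp
  have : (fun x => star (φ x) ⬝ᵥ (O m).mulVec (φ x)) =
      fun x => ∑ i, (starRingEnd ℂ) (φ x i) * ∑ j, O m i j * φ x j := by
    funext x
    simp [dotProduct, Matrix.mulVec, Pi.star_apply, RCLike.star_def]
  rw [this]
  apply Finset.measurable_sum
  intro i _
  apply Measurable.mul
  · exact (Complex.continuous_conj.measurable).comp ((measurable_pi_apply i).comp hφ)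
  · apply Finset.measurable_sum
    intro j _
    exact measurable_const.mul ((measurable_pi_apply j).comp hφ)


/-- Build a bounded continuous function from a continuous `f` with values in `[0,1]`. -/
noncomputable def mkBCF {α : Type*} [TopologicalSpace α] (f : α → ℝ) (hc : Continuous f)
    (h0 : ∀ y, 0 ≤ f y) (h1 : ∀ y, f y ≤ 1) : BoundedContinuousFunction α ℝ :=
  ⟨⟨f, hc⟩, 1, fun x y => by
    rw [Real.dist_eq, abs_sub_le_iff]
    constructor <;> linarith [h0 x, h1 x, h0 y, h1 y]⟩

@[simp] theorem mkBCF_apply {α : Type*} [TopologicalSpace α] (f : α → ℝ) (hc h0 h1) (x : α) :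
    mkBCF f hc h0 h1 x = f x := rfl

theorem cube_volume' (M : ℕ) :
    volume (Set.univ.pi fun _ : Fin M => Set.Icc (-1 : ℝ) 1) = 2 ^ M := by
  rw [volume_pi_pi]; simp [Real.volume_Icc]; norm_num

theorem integral_uniformCube_const_on (M : ℕ) (f : (Fin M → ℝ) → ℝ) (d : ℝ)
    (h : ∀ y ∈ (Set.univ.pi fun _ : Fin M => Set.Icc (-1 : ℝ) 1), f y = d) :
    ∫ y, f y ∂((volume (Set.univ.pi fun _ : Fin M => Set.Icc (-1 : ℝ) 1))⁻¹ •
      volume.restrict (Set.univ.pi fun _ : Fin M => Set.Icc (-1 : ℝ) 1)) = d := by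
  set cube := Set.univ.pi fun _ : Fin M => Set.Icc (-1 : ℝ) 1 with hcube
  have hmeas : MeasurableSet cube := MeasurableSet.univ_pi fun i => measurableSet_Icc
  rw [integral_smul_measure]
  have h1 : ∫ y in cube, f y ∂volume = ∫ _ in cube, d ∂volume :=
    setIntegral_congr_fun hmeas h
  rw [h1, setIntegral_const, cube_volume']
  have : ((2:ℝ≥0∞) ^ M)⁻¹.toReal = ((2:ℝ)^M)⁻¹ := by
    rw [ENNReal.toReal_inv]; norm_num
  rw [this, smul_eq_mul, smul_eq_mul]
  have h2 : ((2:ℝ≥0∞) ^ M).toReal = (2:ℝ)^M := by norm_num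
  rw [Measure.real, cube_volume', h2]
  have : ((2:ℝ)^M) ≠ 0 := by positivity
  field_simp

set_option maxHeartbeats 2000000 in
theorem stmt_13 (n M : ℕ) (hM : 4 ^ n ≤ M)
    (L : ℕ → ℕ) (ν : ∀ k, Measure (Fin (L k) → ℝ)) (hν : ∀ k, IsProbabilityMeasure (ν k))
    (φ : ∀ k, (Fin (L k) → ℝ) → (Fin (2 ^ n) → ℂ)) (hφm : ∀ k, Measurable (φ k))
    (hφu : ∀ k x, star (φ k x) ⬝ᵥ φ k x = 1)
    (O : ℕ → Fin M → Matrix (Fin (2 ^ n)) (Fin (2 ^ n)) ℂ)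
    (hO : ∀ k m, (O k m).IsHermitian) :
    ¬ ∀ F : BoundedContinuousFunction (Fin M → ℝ) ℝ,
        Tendsto
          (fun k => ∫ y, F y ∂(Measure.map
            (fun x => fun m : Fin M => (star (φ k x) ⬝ᵥ (O k m).mulVec (φ k x)).re) (ν k)))
          atTop (nhds (∫ y, F y ∂(uniformCube M))) := by
  classical
  intro hcon
  have hN : 0 < 2 ^ n := pow_pos (by norm_num) n
  have hM0 : 0 < M := lt_of_lt_of_le (pow_pos (by norm_num) n : 0 < 4 ^ n) hM
  have hNM : 2 ^ n * 2 ^ n ≤ M := by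
    calc 2 ^ n * 2 ^ n = 4 ^ n := by rw [← mul_pow]; norm_num
      _ ≤ M := hM
  -- abbreviation for the output map
  let y : ∀ k, (Fin (L k) → ℝ) → (Fin M → ℝ) :=
    fun k x => fun m => (star (φ k x) ⬝ᵥ (O k m).mulVec (φ k x)).re
  have hymeas : ∀ k, Measurable (y k) := fun k => y_measurable _ _ _ (hφm k) (O k)
  -- linear dependence of the observables
  have hdep : ∀ k, ∃ (a : Fin M → ℝ) (b : ℝ), a ≠ 0 ∧
      (∑ m, a m • O k m) + b • (1 : Matrix (Fin (2 ^ n)) (Fin (2 ^ n)) ℂ) = 0 :=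
    fun k => exists_dependence (2 ^ n) M hN hNM (O k) (hO k)
  choose a b ha hzero using hdep
  have hrel : ∀ k x, (∑ m, a k m * y k x m) + b k = 0 :=
    fun k x => pointwise_identity (2 ^ n) M (φ k x) (hφu k x) (O k) (a k) (b k) (hzero k)
  let u : ℕ → (Fin M → ℝ) := fun k => ‖a k‖⁻¹ • a k
  let β : ℕ → ℝ := fun k => -(b k) * ‖a k‖⁻¹
  have hanorm : ∀ k, (0:ℝ) < ‖a k‖ := fun k => norm_pos_iff.mpr (ha k)
  have hunorm : ∀ k, ‖u k‖ = 1 := by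
    intro k
    show ‖(‖a k‖⁻¹ • a k)‖ = 1
    rw [norm_smul, norm_inv, norm_norm]
    exact inv_mul_cancel₀ (hanorm k).ne'
  have hrel' : ∀ k x, ∑ m, u k m * y k x m = β k := by
    intro k x
    have h := hrel k x
    have hsum : ∑ m, a k m * y k x m = -(b k) := by linarith
    calc ∑ m, u k m * y k x m = ∑ m, (‖a k‖⁻¹ * a k m) * y k x m := rfl
      _ = ‖a k‖⁻¹ * ∑ m, a k m * y k x m := by
          rw [Finset.mul_sum]; exact Finset.sum_congr rfl fun m _ => by ring
      _ = -(b k) * ‖a k‖⁻¹ := by rw [hsum]; ring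
  -- converting integrals along the pushforward
  have hconv : ∀ (F : BoundedContinuousFunction (Fin M → ℝ) ℝ) (k : ℕ),
      (∫ z, F z ∂(Measure.map
        (fun x => fun m : Fin M => (star (φ k x) ⬝ᵥ (O k m).mulVec (φ k x)).re) (ν k)))
        = ∫ x, F (y k x) ∂(ν k) :=
    fun F k => integral_map (hymeas k).aemeasurable
      F.continuous.measurable.aestronglyMeasurable
  have hintBCF : ∀ (F : BoundedContinuousFunction (Fin M → ℝ) ℝ) (k : ℕ),
      Integrable (fun x => F (y k x)) (ν k) := by
    intro F k
    apply Integrable.mono' (integrable_const ‖F‖)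
      ((F.continuous.measurable.comp (hymeas k)).aestronglyMeasurable)
    filter_upwards with x
    exact F.norm_coe_le_norm _
  -- the bump function F₀
  have hF₀cont : Continuous (fun z : Fin M → ℝ => min 1 (max 0 (2 - ‖z‖))) := by
    apply continuous_const.min
    exact continuous_const.max (continuous_const.sub continuous_norm)
  let F₀ : BoundedContinuousFunction (Fin M → ℝ) ℝ :=
    mkBCF _ hF₀cont (fun z => le_min zero_le_one (le_max_left _ _))
      (fun z => min_le_left _ _)
  have hcubenorm : ∀ z ∈ (Set.univ.pi fun _ : Fin M => Set.Icc (-1 : ℝ) 1), ‖z‖ ≤ 1 := by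
    intro z hz
    rw [pi_norm_le_iff_of_nonneg zero_le_one]
    intro i
    have := hz i (Set.mem_univ i)
    rw [Real.norm_eq_abs, abs_le]
    exact ⟨this.1, this.2⟩
  have hlim0 : (∫ z, F₀ z ∂(uniformCube M)) = 1 := by
    rw [uniformCube]
    apply integral_uniformCube_const_on
    intro z hz
    have h1 : ‖z‖ ≤ 1 := hcubenorm z hz
    show min 1 (max 0 (2 - ‖z‖)) = 1
    rw [min_eq_left]
    exact le_max_of_le_right (by linarith)
  have h0'' : Tendsto (fun k => ∫ x, F₀ (y k x) ∂(ν k)) atTop (nhds 1) := by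
    have := hcon F₀
    rw [hlim0] at this
    simpa only [hconv] using this
  have hev : ∀ᶠ k in atTop, (1/2 : ℝ) < ∫ x, F₀ (y k x) ∂(ν k) :=
    h0''.eventually (eventually_gt_nhds (by norm_num))
  obtain ⟨K, hK⟩ := eventually_atTop.mp hev
  -- existence of a point with small output, giving boundedness of β
  have hβbound : ∀ k, K ≤ k → |β k| ≤ 2 * M := by
    intro k hk
    have hpos := hK k hk
    have hex : ∃ x, ‖y k x‖ ≤ 2 := by
      by_contra hempty
      push_neg at hempty
      have hzero' : ∀ x, F₀ (y k x) = 0 := by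
        intro x
        show min 1 (max 0 (2 - ‖y k x‖)) = 0
        have := hempty x
        rw [max_eq_left (by linarith), min_eq_right zero_le_one]
      have : (∫ x, F₀ (y k x) ∂(ν k)) = 0 := by
        simp only [hzero', integral_zero]
      linarith [hpos, this]
    obtain ⟨x, hx⟩ := hex
    rw [← hrel' k x]
    calc |∑ m, u k m * y k x m| ≤ ∑ m, |u k m * y k x m| := Finset.abs_sum_le_sum_abs _ _
      _ ≤ ∑ _m : Fin M, 2 := by
          apply Finset.sum_le_sum
          intro m _
          rw [abs_mul]
          have h1 : |u k m| ≤ 1 := by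
            rw [← Real.norm_eq_abs, ← hunorm k]
            exact norm_le_pi_norm (u k) m
          have h2 : |y k x m| ≤ 2 := by
            rw [← Real.norm_eq_abs]
            exact le_trans (norm_le_pi_norm (y k x) m) hx
          nlinarith [abs_nonneg (u k m), abs_nonneg (y k x m)]
      _ = 2 * M := by simp [Finset.sum_const, Finset.card_univ]; ring
  -- compact subsequence extraction
  have hTcomp : IsCompact ((Metric.sphere (0 : Fin M → ℝ) 1) ×ˢ Set.Icc (-(2*(M:ℝ))) (2*M)) :=
    (isCompact_sphere _ _).prod isCompact_Icc
  have hmemT : ∀ j : ℕ, (u (j + K), β (j + K)) ∈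
      ((Metric.sphere (0 : Fin M → ℝ) 1) ×ˢ Set.Icc (-(2*(M:ℝ))) (2*M)) := by
    intro j
    constructor
    · exact mem_sphere_zero_iff_norm.mpr (hunorm _)
    · exact Set.mem_Icc.mpr (abs_le.mp (hβbound (j + K) (Nat.le_add_left K j)))
  obtain ⟨⟨w, c⟩, hmemT', ψ, hψmono, hψtend⟩ := hTcomp.tendsto_subseq hmemT
  have hw : ‖w‖ = 1 := mem_sphere_zero_iff_norm.mp hmemT'.1
  have hutend : Tendsto (fun j => u (ψ j + K)) atTop (nhds w) :=
    (continuous_fst.tendsto _).comp hψtend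
  have hβtend : Tendsto (fun j => β (ψ j + K)) atTop (nhds c) :=
    (continuous_snd.tendsto _).comp hψtend
  have hsum1 : 1 ≤ ∑ i, |w i| := by
    have h : ‖w‖ ≤ ∑ i, |w i| := by
      rw [pi_norm_le_iff_of_nonneg (Finset.sum_nonneg fun i _ => abs_nonneg _)]
      intro i
      rw [Real.norm_eq_abs]
      exact Finset.single_le_sum (f := fun j => |w j|) (fun j _ => abs_nonneg _)
        (Finset.mem_univ i)
    rw [hw] at h
    exact h
  -- the distinguishing test functions F₁ and F₂
  have hF₁cont : Continuous (fun z : Fin M → ℝ => min ((∑ i, w i * z i - c)^2) 1) := by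
    apply Continuous.min _ continuous_const
    apply Continuous.pow
    exact (continuous_finset_sum _ fun i _ =>
      (continuous_const.mul (continuous_apply i))).sub continuous_const
  let F₁ : BoundedContinuousFunction (Fin M → ℝ) ℝ :=
    mkBCF _ hF₁cont (fun z => le_min (sq_nonneg _) zero_le_one)
      (fun z => min_le_right _ _)
  have hF₂cont : Continuous (fun z : Fin M → ℝ => min 1 (max 0 (‖z‖ - 1))) := by
    apply continuous_const.min
    exact continuous_const.max (continuous_norm.sub continuous_const)
  let F₂ : BoundedContinuousFunction (Fin M → ℝ) ℝ :=
    mkBCF _ hF₂cont (fun z => le_min zero_le_one (le_max_left _ _))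
      (fun z => min_le_left _ _)
  have hδ : 0 < ∫ z, F₁ z ∂(uniformCube M) := pos_int M hM0 w hsum1 c
  have hlim2 : (∫ z, F₂ z ∂(uniformCube M)) = 0 := by
    rw [uniformCube]
    apply integral_uniformCube_const_on
    intro z hz
    have h1 : ‖z‖ ≤ 1 := hcubenorm z hz
    show min 1 (max 0 (‖z‖ - 1)) = 0
    rw [max_eq_left (by linarith), min_eq_right zero_le_one]
  have hT1 : Tendsto (fun k => ∫ x, F₁ (y k x) ∂(ν k)) atTop
      (nhds (∫ z, F₁ z ∂(uniformCube M))) := by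
    simpa only [hconv] using hcon F₁
  have hT2 : Tendsto (fun k => ∫ x, F₂ (y k x) ∂(ν k)) atTop (nhds 0) := by
    have := hcon F₂
    rw [hlim2] at this
    simpa only [hconv] using this
  have hφψ : Tendsto (fun j => ψ j + K) atTop atTop :=
    tendsto_atTop_mono (fun j => Nat.le_add_right (ψ j) K) hψmono.tendsto_atTop
  have hT1' := hT1.comp hφψ
  have hT2' := hT2.comp hφψ
  -- the error terms
  let E : ℕ → ℝ := fun k => 2 * M * ‖w - u k‖ + |β k - c|
  have hEtend : Tendsto (fun j => E (ψ j + K)) atTop (nhds 0) := by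
    have h1 : Tendsto (fun j => ‖w - u (ψ j + K)‖) atTop (nhds 0) := by
      have := ((tendsto_const_nhds (x := w)).sub hutend).norm
      simpa using this
    have h2 : Tendsto (fun j => |β (ψ j + K) - c|) atTop (nhds 0) := by
      have := (hβtend.sub (tendsto_const_nhds (x := c))).abs
      simpa using this
    have := ((tendsto_const_nhds (x := 2*(M:ℝ))).mul h1).add h2
    simpa using this
  -- the key pointwise bound
  have hkey : ∀ k x, F₁ (y k x) ≤ E k ^ 2 + F₂ (y k x) := by
    intro k x
    have hF₂0 : 0 ≤ F₂ (y k x) := le_min zero_le_one (le_max_left _ _)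
    by_cases hx2 : ‖y k x‖ ≤ 2
    · have hsplit : ∑ i, w i * y k x i - c
          = (∑ i, (w i - u k i) * y k x i) + (β k - c) := by
        have e1 : ∑ i, (w i - u k i) * y k x i
            = (∑ i, w i * y k x i) - ∑ i, u k i * y k x i := by
          rw [← Finset.sum_sub_distrib]
          exact Finset.sum_congr rfl fun i _ => by ring
        rw [e1, hrel' k x]; ring
      have hbound : |∑ i, (w i - u k i) * y k x i| ≤ 2 * M * ‖w - u k‖ := by
        calc |∑ i, (w i - u k i) * y k x i| ≤ ∑ i, |(w i - u k i) * y k x i| :=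
              Finset.abs_sum_le_sum_abs _ _
          _ ≤ ∑ _i : Fin M, ‖w - u k‖ * 2 := by
              apply Finset.sum_le_sum
              intro i _
              rw [abs_mul]
              have h1 : |w i - u k i| ≤ ‖w - u k‖ := by
                rw [← Real.norm_eq_abs]
                exact norm_le_pi_norm (w - u k) i
              have h2 : |y k x i| ≤ 2 := by
                rw [← Real.norm_eq_abs]
                exact le_trans (norm_le_pi_norm (y k x) i) hx2
              have := norm_nonneg (w - u k)
              nlinarith [abs_nonneg (w i - u k i), abs_nonneg (y k x i)]
          _ = 2 * M * ‖w - u k‖ := by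
              simp [Finset.sum_const, Finset.card_univ]; ring
      have habs : |∑ i, w i * y k x i - c| ≤ E k := by
        rw [hsplit]
        calc |(∑ i, (w i - u k i) * y k x i) + (β k - c)|
            ≤ |∑ i, (w i - u k i) * y k x i| + |β k - c| := abs_add_le _ _
          _ ≤ 2 * M * ‖w - u k‖ + |β k - c| := add_le_add_left hbound _
      have hsq : (∑ i, w i * y k x i - c) ^ 2 ≤ E k ^ 2 := by
        have h := abs_le.mp habs
        nlinarith [h.1, h.2]
      calc F₁ (y k x) ≤ (∑ i, w i * y k x i - c) ^ 2 := min_le_left _ _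
        _ ≤ E k ^ 2 := hsq
        _ ≤ E k ^ 2 + F₂ (y k x) := by linarith
    · push_neg at hx2
      have hF₂1 : F₂ (y k x) = 1 := by
        show min 1 (max 0 (‖y k x‖ - 1)) = 1
        rw [min_eq_left]
        exact le_max_of_le_right (by linarith)
      have hF₁le : F₁ (y k x) ≤ 1 := min_le_right _ _
      rw [hF₂1]
      nlinarith [sq_nonneg (E k)]
  -- integrate the pointwise bound
  have hineq : ∀ k, (∫ x, F₁ (y k x) ∂(ν k)) ≤ E k ^ 2 + ∫ x, F₂ (y k x) ∂(ν k) := by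
    intro k
    have := hν k
    have hi1 := hintBCF F₁ k
    have hi2 : Integrable (fun x => E k ^ 2 + F₂ (y k x)) (ν k) :=
      (integrable_const _).add (hintBCF F₂ k)
    calc (∫ x, F₁ (y k x) ∂(ν k)) ≤ ∫ x, (E k ^ 2 + F₂ (y k x)) ∂(ν k) :=
          integral_mono hi1 hi2 (hkey k)
      _ = E k ^ 2 + ∫ x, F₂ (y k x) ∂(ν k) := by
          rw [integral_add (integrable_const _) (hintBCF F₂ k), integral_const]
          simp [measure_univ]
  -- pass to the limit
  have hRHS : Tendsto (fun j => E (ψ j + K) ^ 2 + ∫ x, F₂ (y (ψ j + K) x) ∂(ν (ψ j + K)))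
      atTop (nhds 0) := by
    have h1 : Tendsto (fun j => E (ψ j + K) ^ 2) atTop (nhds 0) := by
      have := hEtend.pow 2
      simpa using this
    have := h1.add hT2'
    simpa using this
  have hle : (∫ z, F₁ z ∂(uniformCube M)) ≤ 0 :=
    le_of_tendsto_of_tendsto' hT1' hRHS (fun j => hineq (ψ j + K))
  linarith
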